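/- Let (P,ω) be a labeled poset of size n and fix s ∈ P. A function f : P → ℕ is a (P,ω;s)-partition if and only if f' (defined by f'(i) = f(ω^{-1}(i))) is w-compatible for some linear extension w ∈ L(P,ω) that ends with the letter ω(s); moreover these sets S_w are pairwise disjoint, so A(P,ω;s) = ⨆_{w ∈ L(P,ω;s)} S_w. -/
import Mathlib


open Finset Polynomial
open scoped Classical

/-- The set of linear extensions of a finite poset `P`, i.e. order-preserving
bijections `P ≃ Fin n`. -/
noncomputable def linExts (P : Type) [Fintype P] [PartialOrder P] (n : ℕ) :
    Finset (P ≃ Fin n) :=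
  Finset.univ.filter fun f => ∀ x y : P, x ≤ y → f x ≤ f y

/-- The word of a linear extension `f` with respect to the labeling `ω`. -/
def word {P : Type} {n : ℕ} (ω : P → ℕ) (f : P ≃ Fin n) : Fin n → ℕ :=
  fun i => ω (f.symm i)

/-- The major index of a word: the sum of the (1-indexed) descent positions. -/
def majW {n : ℕ} (w : Fin n → ℕ) : ℕ :=
  ∑ i : Fin n, if h : (i : ℕ) + 1 < n then
    (if w ⟨(i : ℕ) + 1, h⟩ < w i then (i : ℕ) + 1 else 0) else 0

/-- The number of inversions of a word. -/
noncomputable def invW {n : ℕ} (w : Fin n → ℕ) : ℕ :=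
  ((Finset.univ : Finset (Fin n × Fin n)).filter
    (fun p => p.1 < p.2 ∧ w p.2 < w p.1)).card

/-- Major index `q`-analogue of the number of linear extensions of `(P, ω)`. -/
noncomputable def eMaj (P : Type) [Fintype P] [PartialOrder P] (ω : P → ℕ) :
    Polynomial ℤ :=
  ∑ f ∈ linExts P (Fintype.card P), Polynomial.X ^ majW (word ω f)

/-- Inversion `q`-analogue of the number of linear extensions of `(P, ω)`. -/
noncomputable def eInv (P : Type) [Fintype P] [PartialOrder P] (ω : P → ℕ) :
    Polynomial ℤ :=
  ∑ f ∈ linExts P (Fintype.card P), Polynomial.X ^ invW (word ω f)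

/-- Major index `q`-analogue of linear extensions whose last letter is the label
of an element of `S`. -/
noncomputable def eMajEndIn (P : Type) [Fintype P] [PartialOrder P]
    (ω : P → ℕ) (S : Set P) : Polynomial ℤ :=
  ∑ f ∈ (linExts P (Fintype.card P)).filter (fun f => ∃ s ∈ S, ∀ x, f x ≤ f s),
    Polynomial.X ^ majW (word ω f)

/-- The Gaussian binomial coefficient `[n choose k]_q`, defined by the
`q`-Pascal recurrence. -/
noncomputable def qBinom : ℕ → ℕ → Polynomial ℤ
  | _, 0 => 1
  | 0, _ + 1 => 0
  | n + 1, k + 1 => qBinom n k + Polynomial.X ^ (k + 1) * qBinom n (k + 1)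

/-- `(P,ω)`-partition. -/
def IsPPart {α : Type} [PartialOrder α] (ω : α → ℕ) (f : α → ℕ) : Prop :=
  ∀ s t : α, s ≤ t → f t ≤ f s ∧ (ω t < ω s → f t < f s)

/-- `(P,ω;s)`-partition. -/
def IsPPartS {α : Type} [PartialOrder α] (ω : α → ℕ) (s : α) (f : α → ℕ) : Prop :=
  IsPPart ω f ∧ (∀ t, f s ≤ f t) ∧ ∀ t, t ≠ s → f s = f t → ω t < ω s

/-- Generating function by size for the maps `α → ℕ` satisfying `pred`. -/
noncomputable def GPart (α : Type) [Fintype α] (pred : (α → ℕ) → Prop) :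
    PowerSeries ℚ :=
  PowerSeries.mk fun m => (Set.ncard {f : α → ℕ | pred f ∧ ∑ t, f t = m} : ℚ)

/-- `f'` is `w`-compatible: `f'(w_1) ≥ f'(w_2) ≥ ⋯ ≥ f'(w_n)` with strict
inequality `f'(w_i) > f'(w_{i+1})` whenever `w_i > w_{i+1}`. -/
def WCompatible {n : ℕ} (f' : Fin n → ℕ) (w : Equiv.Perm (Fin n)) : Prop :=
  ∀ (i : ℕ) (h : i + 1 < n),
    f' (w ⟨i + 1, h⟩) ≤ f' (w ⟨i, by omega⟩) ∧
      (w ⟨i + 1, h⟩ < w ⟨i, by omega⟩ → f' (w ⟨i + 1, h⟩) < f' (w ⟨i, by omega⟩))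


namespace PPartAux

/-- Sorting key: `f` descending, label ascending, lexicographically. -/
def key {P : Type} (κ : P → ℕ) (f : P → ℕ) (x : P) : ℕᵒᵈ ×ₗ ℕ :=
  toLex (OrderDual.toDual (f x), κ x)

lemma key_lt_iff {P : Type} {κ f : P → ℕ} {x y : P} :
    key κ f x < key κ f y ↔ f y < f x ∨ (f x = f y ∧ κ x < κ y) := by
  rw [key, key, Prod.Lex.lt_iff]
  constructor
  · rintro (h | ⟨h1, h2⟩)
    · exact Or.inl h
    · exact Or.inr ⟨OrderDual.toDual.injective h1, h2⟩
  · rintro (h | ⟨h1, h2⟩)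
    · exact Or.inl h
    · exact Or.inr ⟨congrArg OrderDual.toDual h1, h2⟩

lemma key_le_iff {P : Type} {κ f : P → ℕ} {x y : P} :
    key κ f x ≤ key κ f y ↔ f y < f x ∨ (f x = f y ∧ κ x ≤ κ y) := by
  rw [key, key, Prod.Lex.le_iff]
  constructor
  · rintro (h | ⟨h1, h2⟩)
    · exact Or.inl h
    · exact Or.inr ⟨OrderDual.toDual.injective h1, h2⟩
  · rintro (h | ⟨h1, h2⟩)
    · exact Or.inl h
    · exact Or.inr ⟨congrArg OrderDual.toDual h1, h2⟩

lemma wcompat_iff {P : Type} {n : ℕ} (ω : P ≃ Fin (n + 1)) (f : P → ℕ)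
    (g : P ≃ Fin (n + 1)) :
    WCompatible (fun i => f (ω.symm i)) (g.symm.trans ω) ↔
      StrictMono fun i => key (fun x => (ω x : ℕ)) f (g.symm i) := by
  constructor
  · intro hc
    rw [Fin.strictMono_iff_lt_succ]
    intro i
    obtain ⟨h1, h2⟩ := hc (i : ℕ) (by omega)
    simp only [Equiv.trans_apply, Equiv.symm_apply_apply] at h1 h2
    show key (fun x => (ω x : ℕ)) f (g.symm ⟨(i : ℕ), by omega⟩) <
        key (fun x => (ω x : ℕ)) f (g.symm ⟨(i : ℕ) + 1, by omega⟩)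
    rw [key_lt_iff]
    rcases h1.lt_or_eq with h | h
    · exact Or.inl h
    · refine Or.inr ⟨h.symm, ?_⟩
      have hab : g.symm (⟨(i : ℕ), by omega⟩ : Fin (n + 1)) ≠
          g.symm (⟨(i : ℕ) + 1, by omega⟩ : Fin (n + 1)) := by
        intro e
        have := g.symm.injective e
        simp only [Fin.mk.injEq] at this
        omega
      have hne : (ω (g.symm (⟨(i : ℕ), by omega⟩ : Fin (n + 1))) : ℕ) ≠
          (ω (g.symm (⟨(i : ℕ) + 1, by omega⟩ : Fin (n + 1))) : ℕ) := by
        intro e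
        exact hab (ω.injective (Fin.val_injective e))
      have hnlt : ¬ ω (g.symm (⟨(i : ℕ) + 1, by omega⟩ : Fin (n + 1))) <
          ω (g.symm (⟨(i : ℕ), by omega⟩ : Fin (n + 1))) := by
        intro hlt
        exact absurd (h2 hlt) (by omega)
      rw [Fin.lt_def] at hnlt
      omega
  · intro hm i h
    have hlt : (⟨i, by omega⟩ : Fin (n + 1)) < ⟨i + 1, h⟩ := by
      simp [Fin.lt_def]
    have hk := hm hlt
    rw [key_lt_iff] at hk
    simp only [Equiv.trans_apply, Equiv.symm_apply_apply]
    rcases hk with h' | ⟨h1, h2⟩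
    · exact ⟨h'.le, fun _ => h'⟩
    · refine ⟨h1.ge, fun hw => ?_⟩
      rw [Fin.lt_def] at hw
      omega

end PPartAux

/-- The fundamental lemma for `(P,ω;s)`-partitions: `f` is a `(P,ω;s)`-partition
if and only if `f'` is `w`-compatible for exactly one linear extension `w` of
`(P,ω)` ending with the letter `ω(s)`; in particular the sets `S_w` for
`w ∈ L(P,ω;s)` are pairwise disjoint and cover `A(P,ω;s)`. -/
theorem pPartitionS_iff_unique_compatible_linExt_ending (P : Type) [Fintype P]
    [PartialOrder P] (n : ℕ) (hn : Fintype.card P = n + 1)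
    (ω : P ≃ Fin (n + 1)) (s : P) (f : P → ℕ) :
    IsPPartS (fun x => (ω x : ℕ)) s f ↔
      ∃! w : Equiv.Perm (Fin (n + 1)),
        ((∃ g ∈ linExts P (n + 1), w = g.symm.trans ω) ∧ w (Fin.last n) = ω s) ∧
          WCompatible (fun i => f (ω.symm i)) w := by
  classical
  set κ : P → ℕ := fun x => (ω x : ℕ) with hκ
  have keyinj : Function.Injective (PPartAux.key κ f) := by
    intro x y h
    have h2 : κ x = κ y := congrArg (fun p => (ofLex p).2) h
    exact ω.injective (Fin.val_injective h2)
  constructor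
  · rintro ⟨hP, hmin, hmax⟩
    set T : Finset (ℕᵒᵈ ×ₗ ℕ) := Finset.univ.image (PPartAux.key κ f) with hT
    have hTcard : T.card = n + 1 := by
      rw [hT, Finset.card_image_of_injective _ keyinj, Finset.card_univ, hn]
    set φ := T.orderIsoOfFin hTcard with hφ
    have hrange : Set.range (PPartAux.key κ f) = ↑T := by
      rw [hT]; simp [Set.image_univ]
    set g : P ≃ Fin (n + 1) :=
      ((Equiv.ofInjective _ keyinj).trans (Equiv.setCongr hrange)).trans
        φ.symm.toEquiv with hg
    have hgk : ∀ x, (φ (g x) : ℕᵒᵈ ×ₗ ℕ) = PPartAux.key κ f x := by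
      intro x
      rw [hg]
      simp only [Equiv.trans_apply]
      erw [φ.apply_symm_apply]
      rfl
    have hmono : ∀ x y, g x < g y ↔ PPartAux.key κ f x < PPartAux.key κ f y := by
      intro x y
      rw [← hgk x, ← hgk y, Subtype.coe_lt_coe, φ.lt_iff_lt]
    have hkey_s : ∀ x, x ≠ s → PPartAux.key κ f x < PPartAux.key κ f s := by
      intro x hx
      rw [PPartAux.key_lt_iff]
      rcases (hmin x).lt_or_eq with h | h
      · exact Or.inl h
      · exact Or.inr ⟨h.symm, hmax x hx h⟩
    have hgs : g s = Fin.last n := by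
      have hle : ∀ i : Fin (n + 1), i ≤ g s := by
        intro i
        rcases eq_or_ne (g.symm i) s with h | h
        · rw [← h]; simp
        · have := (hmono _ _).mpr (hkey_s _ h)
          rw [Equiv.apply_symm_apply] at this
          exact this.le
      exact le_antisymm (Fin.le_last _) (hle (Fin.last n))
    have hglin : g ∈ linExts P (n + 1) := by
      rw [linExts, Finset.mem_filter]
      refine ⟨Finset.mem_univ _, fun x y hxy => ?_⟩
      rcases eq_or_ne x y with rfl | hne
      · exact le_rfl
      · refine ((hmono x y).mpr ?_).le
        rw [PPartAux.key_lt_iff]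
        obtain ⟨h1, h2⟩ := hP x y hxy
        rcases h1.lt_or_eq with h | h
        · exact Or.inl h
        · refine Or.inr ⟨h.symm, ?_⟩
          have hne2 : κ x ≠ κ y := fun e => hne (ω.injective (Fin.val_injective e))
          have : ¬ κ y < κ x := fun hlt => absurd (h2 hlt) (by omega)
          omega
    have hsm : StrictMono fun i => PPartAux.key κ f (g.symm i) := by
      intro i j hij
      have h2 := hmono (g.symm i) (g.symm j)
      rw [Equiv.apply_symm_apply, Equiv.apply_symm_apply] at h2
      exact h2.mp hij
    refine ⟨g.symm.trans ω, ⟨⟨⟨g, hglin, rfl⟩, ?_⟩, ?_⟩, ?_⟩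
    · rw [Equiv.trans_apply, ← hgs, Equiv.symm_apply_apply]
    · exact (PPartAux.wcompat_iff ω f g).mpr hsm
    · rintro w' ⟨⟨⟨g', hg'lin, rfl⟩, hlast'⟩, hcomp'⟩
      have hsm' := (PPartAux.wcompat_iff ω f g').mp hcomp'
      haveI : WellFoundedLT (Fin (n + 1)) := Finite.to_wellFoundedLT
      have hr : Set.range (PPartAux.key κ f ∘ ⇑g'.symm) =
          Set.range (PPartAux.key κ f ∘ ⇑g.symm) := by
        rw [g'.symm.surjective.range_comp, g.symm.surjective.range_comp]
      have hsm2 : StrictMono (PPartAux.key κ f ∘ ⇑g'.symm) := hsm'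
      have hsm3 : StrictMono (PPartAux.key κ f ∘ ⇑g.symm) := hsm
      have heq := (hsm2.range_inj hsm3).mp hr
      have : g'.symm = g.symm := by
        ext i
        exact keyinj (congrFun heq i)
      rw [this]
  · rintro ⟨w, ⟨⟨⟨g, hglin, rfl⟩, hlast⟩, hcomp⟩, -⟩
    have hsm := (PPartAux.wcompat_iff ω f g).mp hcomp
    have hgs : g s = Fin.last n := by
      rw [Equiv.trans_apply] at hlast
      have := ω.injective hlast
      rw [← this, Equiv.apply_symm_apply]
    have gmono : ∀ x y : P, x ≤ y → g x ≤ g y := by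
      rw [linExts, Finset.mem_filter] at hglin
      exact hglin.2
    have keyle : ∀ x y : P, g x ≤ g y →
        PPartAux.key κ f x ≤ PPartAux.key κ f y := by
      intro x y h
      have := hsm.monotone h
      simpa using this
    refine ⟨fun x y hxy => ?_, fun t => ?_, fun t ht hft => ?_⟩
    · have hk := keyle x y (gmono x y hxy)
      rw [PPartAux.key_le_iff] at hk
      constructor
      · rcases hk with h | ⟨h, -⟩
        · exact h.le
        · exact h.ge
      · intro hlt
        rcases hk with h | ⟨-, h⟩
        · exact h
        · exact absurd hlt (by omega)
    · have hk := keyle t s (by rw [hgs]; exact Fin.le_last _)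
      rw [PPartAux.key_le_iff] at hk
      rcases hk with h | ⟨h, -⟩
      · exact h.le
      · exact h.ge
    · have hk : PPartAux.key κ f t < PPartAux.key κ f s :=
        lt_of_le_of_ne (keyle t s (by rw [hgs]; exact Fin.le_last _))
          (fun e => ht (keyinj e))
      rw [PPartAux.key_lt_iff] at hk
      rcases hk with h | ⟨-, h⟩
      · omega
      · exact h
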